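/- For every τ ∈ Λ²₊V and all X, Y ∈ V with ⟨X,Y⟩ = 0, the 2-vector X∧(K_τY) − (K_τX)∧Y is orthogonal to Λ²₊V, i.e. it lies in Λ²₋V. -/

import Mathlib

open scoped RealInnerProductSpace

set_option maxHeartbeats 1000000 in
/-- Let `V` be a 4-dimensional oriented real inner product space with Hodge
star `⋆` on `Λ²V`.  For every `τ ∈ Λ²₊V` and all `X, Y ∈ V` with `⟨X,Y⟩ = 0`, the 2-vector
`X∧(K_τY) − (K_τX)∧Y` is orthogonal to `Λ²₊V`, i.e. it lies in `Λ²₋V`. -/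
theorem stmt_9 {V L : Type*}
    [NormedAddCommGroup V] [InnerProductSpace ℝ V]
    [NormedAddCommGroup L] [InnerProductSpace ℝ L]
    (h4 : Module.finrank ℝ V = 4)
    (o : Orientation ℝ V (Fin 4))
    (wedge : V →ₗ[ℝ] V →ₗ[ℝ] L)
    (wedge_self : ∀ v : V, wedge v v = 0)
    (wedge_span : Submodule.span ℝ {x : L | ∃ u v : V, wedge u v = x} = ⊤)
    (inner_wedge : ∀ v₁ v₂ v₃ v₄ : V,
      ⟪wedge v₁ v₂, wedge v₃ v₄⟫ =
        (1 / 2) * (⟪v₁, v₃⟫ * ⟪v₂, v₄⟫ - ⟪v₁, v₄⟫ * ⟪v₂, v₃⟫))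
    (hodge : L →ₗ[ℝ] L)
    (hodge_hodge : ∀ x : L, hodge (hodge x) = x)
    (hodge_wedge : ∀ b : OrthonormalBasis (Fin 4) ℝ V, b.toBasis.orientation = o →
      hodge (wedge (b 0) (b 1)) = wedge (b 2) (b 3) ∧
      hodge (wedge (b 0) (b 2)) = wedge (b 3) (b 1) ∧
      hodge (wedge (b 0) (b 3)) = wedge (b 1) (b 2))
    (τ : L) (hτ : hodge τ = τ)
    (K : V →ₗ[ℝ] V)
    (hK : ∀ X Y : V, ⟪K X, Y⟫ = 2 * ⟪τ, wedge X Y⟫) :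
    ∀ X Y : V, ⟪X, Y⟫ = 0 →
      (∀ ρ : L, hodge ρ = ρ → ⟪wedge X (K Y) - wedge (K X) Y, ρ⟫ = 0) ∧
      hodge (wedge X (K Y) - wedge (K X) Y) = -(wedge X (K Y) - wedge (K X) Y) := by
  classical
  have hb4 : (0:ℕ) < 4 := by norm_num
  obtain ⟨b, hb⟩ : ∃ b : OrthonormalBasis (Fin 4) ℝ V, b.toBasis.orientation = o :=
    ⟨_, o.finOrthonormalBasis_orientation hb4 h4⟩
  have wanti : ∀ u v : V, wedge u v = - wedge v u := by
    intro u v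
    have h := wedge_self (u + v)
    simp only [map_add, LinearMap.add_apply, wedge_self u, wedge_self v, zero_add, add_zero] at h
    exact eq_neg_of_add_eq_zero_right h
  have horth : ∀ i j : Fin 4, ⟪b i, b j⟫ = if i = j then 1 else 0 :=
    orthonormal_iff_ite.mp b.orthonormal
  have innE : ∀ i j k l : Fin 4, ⟪wedge (b i) (b j), wedge (b k) (b l)⟫ =
      (1/2) * ((if i = k then (1:ℝ) else 0) * (if j = l then 1 else 0)
        - (if i = l then (1:ℝ) else 0) * (if j = k then 1 else 0)) := by
    intro i j k l
    rw [inner_wedge, horth, horth, horth, horth]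
  have expand : ∀ z : L, z =
      (2*⟪z, wedge (b 0) (b 1)⟫) • wedge (b 0) (b 1)
      + (2*⟪z, wedge (b 0) (b 2)⟫) • wedge (b 0) (b 2)
      + (2*⟪z, wedge (b 0) (b 3)⟫) • wedge (b 0) (b 3)
      + (2*⟪z, wedge (b 1) (b 2)⟫) • wedge (b 1) (b 2)
      + (2*⟪z, wedge (b 1) (b 3)⟫) • wedge (b 1) (b 3)
      + (2*⟪z, wedge (b 2) (b 3)⟫) • wedge (b 2) (b 3) := by
    intro z
    have hz : z ∈ Submodule.span ℝ {x : L | ∃ u v : V, wedge u v = x} := by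
      rw [wedge_span]; exact Submodule.mem_top
    induction hz using Submodule.span_induction with
    | mem x hx =>
      obtain ⟨u, v, rfl⟩ := hx
      have hu := b.sum_repr' u
      have hv := b.sum_repr' v
      conv_lhs => rw [← hu, ← hv]
      simp only [map_sum, LinearMap.sum_apply, Fin.sum_univ_four, map_add, map_smul,
        LinearMap.add_apply, LinearMap.smul_apply, smul_smul]
      simp only [inner_wedge]
      simp only [real_inner_comm u, real_inner_comm v]
      simp only [wedge_self, wanti (b 1) (b 0), wanti (b 2) (b 0), wanti (b 3) (b 0),
        wanti (b 2) (b 1), wanti (b 3) (b 1), wanti (b 3) (b 2)]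
      module
    | zero => simp
    | add x y hx hy ihx ihy =>
      conv_lhs => rw [ihx, ihy]
      simp only [inner_add_left]
      module
    | smul r x hx ih =>
      conv_lhs => rw [ih]
      simp only [real_inner_smul_left]
      module
  obtain ⟨hd1, hd2, hd3⟩ := hodge_wedge b hb
  have hd2' : hodge (wedge (b 0) (b 2)) = -(wedge (b 1) (b 3)) := by
    rw [hd2, wanti (b 3) (b 1)]
  have hd4 : hodge (wedge (b 2) (b 3)) = wedge (b 0) (b 1) := by
    rw [← hd1, hodge_hodge]
  have hd5 : hodge (wedge (b 1) (b 3)) = -(wedge (b 0) (b 2)) := by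
    have h31 : hodge (wedge (b 3) (b 1)) = wedge (b 0) (b 2) := by rw [← hd2, hodge_hodge]
    rw [wanti (b 1) (b 3), map_neg, h31]
  have hd6 : hodge (wedge (b 1) (b 2)) = wedge (b 0) (b 3) := by
    rw [← hd3, hodge_hodge]
  have sd : ∀ σ : L, hodge σ = σ →
      ⟪σ, wedge (b 2) (b 3)⟫ = ⟪σ, wedge (b 0) (b 1)⟫ ∧
      ⟪σ, wedge (b 1) (b 3)⟫ = -⟪σ, wedge (b 0) (b 2)⟫ ∧
      ⟪σ, wedge (b 1) (b 2)⟫ = ⟪σ, wedge (b 0) (b 3)⟫ := by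
    intro σ hσ
    have key : (2*⟪σ, wedge (b 0) (b 1)⟫) • wedge (b 2) (b 3)
        + (2*⟪σ, wedge (b 0) (b 2)⟫) • (-(wedge (b 1) (b 3)))
        + (2*⟪σ, wedge (b 0) (b 3)⟫) • wedge (b 1) (b 2)
        + (2*⟪σ, wedge (b 1) (b 2)⟫) • wedge (b 0) (b 3)
        + (2*⟪σ, wedge (b 1) (b 3)⟫) • (-(wedge (b 0) (b 2)))
        + (2*⟪σ, wedge (b 2) (b 3)⟫) • wedge (b 0) (b 1) = σ := by
      conv_rhs => rw [← hσ]
      conv_rhs => rw [expand σ]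
      simp only [map_add, map_smul, hd1, hd2', hd3, hd4, hd5, hd6]
    refine ⟨?_, ?_, ?_⟩
    · have h1 := congrArg (fun z : L => ⟪z, wedge (b 0) (b 1)⟫) key
      simp [inner_add_left, real_inner_smul_left, inner_neg_left, innE] at h1
      rw [← real_inner_self_eq_norm_sq, innE] at h1
      norm_num [Fin.ext_iff] at h1
      linarith
    · have h1 := congrArg (fun z : L => ⟪z, wedge (b 0) (b 2)⟫) key
      simp [inner_add_left, real_inner_smul_left, inner_neg_left, innE] at h1
      rw [← real_inner_self_eq_norm_sq, innE] at h1
      norm_num [Fin.ext_iff] at h1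
      linarith
    · have h1 := congrArg (fun z : L => ⟪z, wedge (b 0) (b 3)⟫) key
      simp [inner_add_left, real_inner_smul_left, inner_neg_left, innE] at h1
      rw [← real_inner_self_eq_norm_sq, innE] at h1
      norm_num [Fin.ext_iff] at h1
      linarith
  have Tdiag : ∀ i : Fin 4, ⟪τ, wedge (b i) (b i)⟫ = 0 := by
    intro i; rw [wedge_self, inner_zero_right]
  have Tskew : ∀ i j : Fin 4, ⟪τ, wedge (b j) (b i)⟫ = -⟪τ, wedge (b i) (b j)⟫ := by
    intro i j; rw [wanti (b j) (b i), inner_neg_right]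
  obtain ⟨ht1, ht2, ht3⟩ := sd τ hτ
  have hKc : ∀ (Z : V) (i : Fin 4), ⟪K Z, b i⟫ =
      2*(⟪Z, b 0⟫*⟪τ, wedge (b 0) (b i)⟫ + ⟪Z, b 1⟫*⟪τ, wedge (b 1) (b i)⟫
        + ⟪Z, b 2⟫*⟪τ, wedge (b 2) (b i)⟫ + ⟪Z, b 3⟫*⟪τ, wedge (b 3) (b i)⟫) := by
    intro Z i
    rw [hK]
    have hz := b.sum_repr' Z
    conv_lhs => rw [← hz]
    simp only [map_sum, LinearMap.sum_apply, Fin.sum_univ_four, map_add, map_smul,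
      LinearMap.add_apply, LinearMap.smul_apply, inner_add_right, real_inner_smul_right]
    simp only [real_inner_comm Z]
    try ring
  intro X Y hXY
  have h0 : ⟪X, b 0⟫*⟪Y, b 0⟫ + ⟪X, b 1⟫*⟪Y, b 1⟫ + ⟪X, b 2⟫*⟪Y, b 2⟫
      + ⟪X, b 3⟫*⟪Y, b 3⟫ = 0 := by
    have hs := b.sum_inner_mul_inner X Y
    rw [hXY] at hs
    simp only [Fin.sum_univ_four] at hs
    rw [real_inner_comm Y (b 0), real_inner_comm Y (b 1), real_inner_comm Y (b 2),
      real_inner_comm Y (b 3)] at hs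
    linarith
  set ω : L := wedge X (K Y) - wedge (K X) Y with hω
  have ts10 := Tskew 0 1
  have ts20 := Tskew 0 2
  have ts30 := Tskew 0 3
  have ts21 := Tskew 1 2
  have ts31 := Tskew 1 3
  have ts32 := Tskew 2 3
  have key1 : ⟪ω, wedge (b 0) (b 1)⟫ + ⟪ω, wedge (b 2) (b 3)⟫ = 0 := by
    rw [hω]
    simp only [inner_sub_left, inner_wedge, hKc]
    simp only [Tdiag, ts10, ts20, ts30, ts21, ts31, ts32, ht1, ht2, ht3]
    linear_combination (2*⟪τ, wedge (b 0) (b 1)⟫) * h0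
  have key2 : ⟪ω, wedge (b 0) (b 2)⟫ - ⟪ω, wedge (b 1) (b 3)⟫ = 0 := by
    rw [hω]
    simp only [inner_sub_left, inner_wedge, hKc]
    simp only [Tdiag, ts10, ts20, ts30, ts21, ts31, ts32, ht1, ht2, ht3]
    linear_combination (2*⟪τ, wedge (b 0) (b 2)⟫) * h0
  have key3 : ⟪ω, wedge (b 0) (b 3)⟫ + ⟪ω, wedge (b 1) (b 2)⟫ = 0 := by
    rw [hω]
    simp only [inner_sub_left, inner_wedge, hKc]
    simp only [Tdiag, ts10, ts20, ts30, ts21, ts31, ts32, ht1, ht2, ht3]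
    linear_combination (2*⟪τ, wedge (b 0) (b 3)⟫) * h0
  refine ⟨?_, ?_⟩
  · intro ρ hρ
    obtain ⟨hr1, hr2, hr3⟩ := sd ρ hρ
    conv_lhs => rw [expand ρ]
    simp only [inner_add_right, real_inner_smul_right]
    rw [hr1, hr2, hr3]
    linear_combination (2*⟪ρ, wedge (b 0) (b 1)⟫) * key1
      + (2*⟪ρ, wedge (b 0) (b 2)⟫) * key2 + (2*⟪ρ, wedge (b 0) (b 3)⟫) * key3
  · rw [expand ω]
    simp only [map_add, map_smul, hd1, hd2', hd3, hd4, hd5, hd6]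
    have e1 : ⟪ω, wedge (b 2) (b 3)⟫ = -⟪ω, wedge (b 0) (b 1)⟫ := by linarith
    have e2 : ⟪ω, wedge (b 1) (b 3)⟫ = ⟪ω, wedge (b 0) (b 2)⟫ := by linarith
    have e3 : ⟪ω, wedge (b 1) (b 2)⟫ = -⟪ω, wedge (b 0) (b 3)⟫ := by linarith
    rw [e1, e2, e3]
    module
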